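/- Let L be a simple Lie algebra graded by a group G. If g, h ∈ G satisfy [L_g, L_h] ≠ 0, then gh = hg. -/

import Mathlib

/-- If a simple Lie algebra `L` is graded by a group `G` and
`[L_g, L_h] ≠ 0`, then `g` and `h` commute. -/
theorem commute_of_bracket_ne_zero
    {F : Type*} [Field F] {L : Type*} [LieRing L] [LieAlgebra F L]
    [LieAlgebra.IsSimple F L] {G : Type*} [Group G] [DecidableEq G]
    (Lg : G → Submodule F L)
    (hdec : DirectSum.IsInternal Lg)
    (hbr : ∀ g h : G, ∀ x ∈ Lg g, ∀ y ∈ Lg h, ⁅x, y⁆ ∈ Lg (g * h)) :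
    ∀ g h : G, (∃ x ∈ Lg g, ∃ y ∈ Lg h, ⁅x, y⁆ ≠ 0) → g * h = h * g := by
  rintro g h ⟨x, hx, y, hy, hne⟩
  by_contra hcomm
  have h1 : ⁅x, y⁆ ∈ Lg (g * h) := hbr g h x hx y hy
  have h2 : ⁅x, y⁆ ∈ Lg (h * g) := by
    have := (Lg (h * g)).neg_mem (hbr h g y hy x hx)
    rwa [← lie_skew, neg_neg] at this
  have hdisj : Disjoint (Lg (g * h)) (Lg (h * g)) :=
    hdec.submodule_iSupIndep.pairwiseDisjoint hcomm
  exact hne (Submodule.disjoint_def.mp hdisj _ h1 h2)
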